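/- Let κ > 0, a > κ, s ≥ 1 an integer, and d ≥ 2. Then Σ_{n ≥ 0} 2^{κn/(κ+1)} · (n+1)^{p} (s+n)^{q} s / (1 + 2^{(n−s)/(κ+1)})^{a} ≪ 2^{κs/(κ+1)} s^{d-1} whenever p + q ≤ d − 2, with implied constant depending only on κ, a, d. -/

import Mathlib

open scoped BigOperators


lemma aux_summable (ρ : ℝ) (h0 : 0 < ρ) (h1 : ρ < 1) (d : ℕ) :
    Summable (fun n : ℕ => (1 + (n : ℝ)) ^ d * ρ ^ n) := by
  have h := summable_pow_mul_geometric_of_norm_lt_one (R := ℝ) d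
    (by rwa [Real.norm_eq_abs, abs_of_pos h0])
  have h2 : Summable (fun n : ℕ => ((n + 1 : ℕ) : ℝ) ^ d * ρ ^ (n + 1)) :=
    h.comp_injective (add_left_injective 1)
  have h3 : Summable (fun n : ℕ => ((1 + (n : ℝ)) ^ d * ρ ^ n * ρ) * ρ⁻¹) := by
    apply Summable.mul_right
    refine h2.congr fun n => ?_
    push_cast
    ring
  refine h3.congr fun n => ?_
  field_simp

lemma H_summable (κ a : ℝ) (d : ℕ) (hκ : 0 < κ) (ha : κ < a) :
    Summable (fun k : ℤ => (1 + |(k : ℝ)|) ^ d *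
      min ((2 : ℝ) ^ (κ * (k : ℝ) / (κ + 1))) ((2 : ℝ) ^ ((κ - a) * (k : ℝ) / (κ + 1)))) := by
  have hκ1 : (0 : ℝ) < κ + 1 := by linarith
  apply Summable.of_nat_of_neg
  · -- positive side: min ≤ 2^((κ-a) n/(κ+1)) = ρ^n
    set ρ : ℝ := (2 : ℝ) ^ ((κ - a) / (κ + 1)) with hρ
    have hρ0 : 0 < ρ := Real.rpow_pos_of_pos two_pos _
    have hρ1 : ρ < 1 := Real.rpow_lt_one_of_one_lt_of_neg one_lt_two
      (div_neg_of_neg_of_pos (by linarith) hκ1)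
    apply Summable.of_nonneg_of_le (f := fun n : ℕ => (1 + (n : ℝ)) ^ d * ρ ^ n)
    · intro n
      positivity
    · intro n
      have h2 : (2 : ℝ) ^ ((κ - a) * (n : ℝ) / (κ + 1)) = ρ ^ n := by
        rw [hρ, ← Real.rpow_natCast ((2:ℝ) ^ ((κ - a) / (κ + 1))) n,
          ← Real.rpow_mul (by norm_num)]
        ring_nf
      push_cast
      rw [abs_of_nonneg (Nat.cast_nonneg n)]
      exact mul_le_mul_of_nonneg_left (h2 ▸ min_le_right _ _) (by positivity)
    · exact aux_summable ρ hρ0 hρ1 d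
  · -- negative side: min ≤ 2^(κ(-n)/(κ+1)) = ρ'^n
    set ρ : ℝ := (2 : ℝ) ^ (-(κ / (κ + 1))) with hρ
    have hρ0 : 0 < ρ := Real.rpow_pos_of_pos two_pos _
    have hρ1 : ρ < 1 := Real.rpow_lt_one_of_one_lt_of_neg one_lt_two
      (neg_neg_of_pos (div_pos hκ hκ1))
    apply Summable.of_nonneg_of_le (f := fun n : ℕ => (1 + (n : ℝ)) ^ d * ρ ^ n)
    · intro n
      positivity
    · intro n
      have h2 : (2 : ℝ) ^ (κ * (-(n : ℝ)) / (κ + 1)) = ρ ^ n := by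
        rw [hρ, ← Real.rpow_natCast ((2:ℝ) ^ (-(κ / (κ + 1)))) n,
          ← Real.rpow_mul (by norm_num)]
        ring_nf
      push_cast
      rw [abs_neg, abs_of_nonneg (Nat.cast_nonneg n)]
      exact mul_le_mul_of_nonneg_left (h2 ▸ min_le_left _ _) (by positivity)
    · exact aux_summable ρ hρ0 hρ1 d

lemma key_bound (κ a : ℝ) (d : ℕ) (hκ : 0 < κ) (ha : κ < a) (hd : 2 ≤ d)
    (s : ℕ) (hs : 1 ≤ s) (p q : ℕ) (hpq : p + q ≤ d - 2) (m : ℕ) :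
    (2 : ℝ) ^ (κ * m / (κ + 1)) * (m + 1 : ℝ) ^ p * ((s : ℝ) + m) ^ q * (s : ℝ) /
      (1 + (2 : ℝ) ^ (((m : ℝ) - s) / (κ + 1))) ^ a
    ≤ (2 : ℝ) ^ d * (s : ℝ) ^ (d - 1) * (2 : ℝ) ^ (κ * s / (κ + 1)) *
      ((1 + |(m : ℝ) - s|) ^ d *
        min ((2 : ℝ) ^ (κ * ((m : ℝ) - s) / (κ + 1)))
          ((2 : ℝ) ^ ((κ - a) * ((m : ℝ) - s) / (κ + 1)))) := by
  have hκ1 : (0 : ℝ) < κ + 1 := by linarith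
  have hs1 : (1 : ℝ) ≤ (s : ℝ) := by exact_mod_cast hs
  set t : ℝ := (m : ℝ) - s with ht
  set x : ℝ := (2 : ℝ) ^ (t / (κ + 1)) with hxdef
  have hx : 0 < x := Real.rpow_pos_of_pos two_pos _
  have ht1 : (1 : ℝ) ≤ 1 + |t| := by linarith [abs_nonneg t]
  have hsm : (1 : ℝ) ≤ (s : ℝ) + m := by
    have : (0 : ℝ) ≤ (m : ℝ) := Nat.cast_nonneg m
    linarith
  have hspow : (s : ℝ) ^ (d - 2) * s = (s : ℝ) ^ (d - 1) := by
    rw [← pow_succ]; congr 1; omega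
  -- numerator bound
  have hN : (2 : ℝ) ^ (κ * m / (κ + 1)) * (m + 1 : ℝ) ^ p * ((s : ℝ) + m) ^ q * (s : ℝ)
      ≤ (2 : ℝ) ^ d * (s : ℝ) ^ (d - 1) * (1 + |t|) ^ d * (2 : ℝ) ^ (κ * m / (κ + 1)) := by
    have h1 : (m + 1 : ℝ) ^ p * ((s : ℝ) + m) ^ q ≤ ((s : ℝ) + m) ^ (p + q) := by
      rw [pow_add]
      have : (m + 1 : ℝ) ^ p ≤ ((s : ℝ) + m) ^ p := by
        apply pow_le_pow_left₀ (by positivity)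
        linarith
      exact mul_le_mul_of_nonneg_right this (by positivity)
    have h2 : ((s : ℝ) + m) ^ (p + q) ≤ ((s : ℝ) + m) ^ (d - 2) :=
      pow_le_pow_right₀ hsm hpq
    have h3 : (s : ℝ) + m ≤ 2 * s * (1 + |t|) := by
      rcases le_total ((m : ℝ)) (s : ℝ) with h | h
      · rw [ht, abs_of_nonpos (by linarith)]
        nlinarith
      · rw [ht, abs_of_nonneg (by linarith)]
        nlinarith
    have h4 : ((s : ℝ) + m) ^ (d - 2) ≤ (2 * s) ^ (d - 2) * (1 + |t|) ^ (d - 2) := by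
      rw [← mul_pow]
      exact pow_le_pow_left₀ (by positivity) h3 _
    have h5 : (1 + |t|) ^ (d - 2) ≤ (1 + |t|) ^ d := pow_le_pow_right₀ ht1 (by omega)
    have h6 : (2 : ℝ) ^ (d - 2) ≤ (2 : ℝ) ^ d := pow_le_pow_right₀ one_le_two (by omega)
    calc (2 : ℝ) ^ (κ * m / (κ + 1)) * (m + 1 : ℝ) ^ p * ((s : ℝ) + m) ^ q * (s : ℝ)
        = ((m + 1 : ℝ) ^ p * ((s : ℝ) + m) ^ q) * (s : ℝ) * (2 : ℝ) ^ (κ * m / (κ + 1)) := by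
          ring
      _ ≤ ((2 * s) ^ (d - 2) * (1 + |t|) ^ d) * (s : ℝ) * (2 : ℝ) ^ (κ * m / (κ + 1)) := by
          have hrp : (0:ℝ) < (2 : ℝ) ^ (κ * m / (κ + 1)) := Real.rpow_pos_of_pos two_pos _
          have := (h1.trans h2).trans (h4.trans (by
            exact mul_le_mul_of_nonneg_left h5 (by positivity)))
          exact mul_le_mul_of_nonneg_right
            (mul_le_mul_of_nonneg_right this (by positivity)) hrp.le
      _ = ((2:ℝ) ^ (d - 2) * ((s:ℝ) ^ (d-2) * s)) * (1 + |t|) ^ d * (2 : ℝ) ^ (κ * m / (κ + 1)) := by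
          rw [mul_pow]; ring
      _ = (2:ℝ) ^ (d - 2) * (s : ℝ) ^ (d - 1) * (1 + |t|) ^ d * (2 : ℝ) ^ (κ * m / (κ + 1)) := by
          rw [hspow]
      _ ≤ (2 : ℝ) ^ d * (s : ℝ) ^ (d - 1) * (1 + |t|) ^ d * (2 : ℝ) ^ (κ * m / (κ + 1)) := by
          have hrp : (0:ℝ) < (2 : ℝ) ^ (κ * m / (κ + 1)) := Real.rpow_pos_of_pos two_pos _
          gcongr
  -- denominator bounds
  have hD1 : (1 : ℝ) ≤ (1 + x) ^ a := by
    have h := Real.rpow_le_rpow (by norm_num : (0:ℝ) ≤ 1)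
      (by linarith : (1:ℝ) ≤ 1 + x) (by linarith : 0 ≤ a)
    rwa [Real.one_rpow] at h
  have hDx : x ^ a ≤ (1 + x) ^ a :=
    Real.rpow_le_rpow hx.le (by linarith) (by linarith)
  have hD0 : (0 : ℝ) < (1 + x) ^ a := Real.rpow_pos_of_pos (by linarith) _
  have hN0 : (0 : ℝ) ≤ (2 : ℝ) ^ (κ * m / (κ + 1)) * (m + 1 : ℝ) ^ p * ((s : ℝ) + m) ^ q * (s : ℝ) := by
    positivity
  -- exponent identities
  have hsplit1 : (2 : ℝ) ^ (κ * s / (κ + 1)) * (2 : ℝ) ^ (κ * t / (κ + 1))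
      = (2 : ℝ) ^ (κ * m / (κ + 1)) := by
    rw [← Real.rpow_add two_pos]
    congr 1
    rw [← add_div, ht]
    ring_nf
  have hsplit2 : (2 : ℝ) ^ (κ * s / (κ + 1)) * (2 : ℝ) ^ ((κ - a) * t / (κ + 1))
      = (2 : ℝ) ^ (κ * m / (κ + 1)) * x ^ (-a) := by
    rw [hxdef, ← Real.rpow_mul (by norm_num : (0:ℝ) ≤ 2), ← Real.rpow_add two_pos,
      ← Real.rpow_add two_pos]
    congr 1
    rw [ht]
    field_simp
    ring
  rcases min_cases ((2 : ℝ) ^ (κ * t / (κ + 1))) ((2 : ℝ) ^ ((κ - a) * t / (κ + 1))) with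
    ⟨hm, _⟩ | ⟨hm, _⟩ <;> rw [hm]
  · have hr : (2 : ℝ) ^ d * (s : ℝ) ^ (d - 1) * (2 : ℝ) ^ (κ * s / (κ + 1)) *
        ((1 + |t|) ^ d * (2 : ℝ) ^ (κ * t / (κ + 1)))
        = (2 : ℝ) ^ d * (s : ℝ) ^ (d - 1) * (1 + |t|) ^ d * (2 : ℝ) ^ (κ * m / (κ + 1)) := by
      rw [← hsplit1]; ring
    rw [hr]
    exact (div_le_self hN0 hD1).trans hN
  · have hr : (2 : ℝ) ^ d * (s : ℝ) ^ (d - 1) * (2 : ℝ) ^ (κ * s / (κ + 1)) *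
        ((1 + |t|) ^ d * (2 : ℝ) ^ ((κ - a) * t / (κ + 1)))
        = ((2 : ℝ) ^ d * (s : ℝ) ^ (d - 1) * (1 + |t|) ^ d * (2 : ℝ) ^ (κ * m / (κ + 1)))
          * x ^ (-a) := by
      rw [show (2 : ℝ) ^ d * (s : ℝ) ^ (d - 1) * (2 : ℝ) ^ (κ * s / (κ + 1)) *
        ((1 + |t|) ^ d * (2 : ℝ) ^ ((κ - a) * t / (κ + 1)))
        = (2 : ℝ) ^ d * (s : ℝ) ^ (d - 1) * (1 + |t|) ^ d *
          ((2 : ℝ) ^ (κ * s / (κ + 1)) * (2 : ℝ) ^ ((κ - a) * t / (κ + 1))) from by ring,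
        hsplit2]
      ring
    rw [hr]
    have hxa : (0 : ℝ) < x ^ a := Real.rpow_pos_of_pos hx a
    calc (2 : ℝ) ^ (κ * m / (κ + 1)) * (m + 1 : ℝ) ^ p * ((s : ℝ) + m) ^ q * (s : ℝ) /
          (1 + x) ^ a
        ≤ (2 : ℝ) ^ (κ * m / (κ + 1)) * (m + 1 : ℝ) ^ p * ((s : ℝ) + m) ^ q * (s : ℝ) /
          x ^ a := by gcongr
      _ = ((2 : ℝ) ^ (κ * m / (κ + 1)) * (m + 1 : ℝ) ^ p * ((s : ℝ) + m) ^ q * (s : ℝ))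
          * x ^ (-a) := by
          rw [Real.rpow_neg hx.le, div_eq_mul_inv]
      _ ≤ ((2 : ℝ) ^ d * (s : ℝ) ^ (d - 1) * (1 + |t|) ^ d * (2 : ℝ) ^ (κ * m / (κ + 1)))
          * x ^ (-a) := by
          exact mul_le_mul_of_nonneg_right hN (Real.rpow_nonneg hx.le _)

/-- The combined estimate for the final sums:
`Σ_{n≥0} 2^{κn/(κ+1)} (n+1)^p (s+n)^q s / (1+2^{(n-s)/(κ+1)})^a ≪ 2^{κs/(κ+1)} s^{d-1}`
for `p + q ≤ d - 2`, with implied constant depending only on `κ, a, d`. -/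
theorem final_sum_estimate (κ a : ℝ) (d : ℕ) (hκ : 0 < κ) (ha : κ < a) (hd : 2 ≤ d) :
    ∃ C : ℝ, 0 < C ∧ ∀ s : ℕ, 1 ≤ s → ∀ p q : ℕ, p + q ≤ d - 2 →
      Summable (fun m : ℕ =>
        (2 : ℝ) ^ (κ * m / (κ + 1)) * (m + 1 : ℝ) ^ p * ((s : ℝ) + m) ^ q * (s : ℝ) /
          (1 + (2 : ℝ) ^ (((m : ℝ) - s) / (κ + 1))) ^ a) ∧
      (∑' m : ℕ,
        (2 : ℝ) ^ (κ * m / (κ + 1)) * (m + 1 : ℝ) ^ p * ((s : ℝ) + m) ^ q * (s : ℝ) /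
          (1 + (2 : ℝ) ^ (((m : ℝ) - s) / (κ + 1))) ^ a)
        ≤ C * (2 : ℝ) ^ (κ * s / (κ + 1)) * (s : ℝ) ^ (d - 1) := by
  have hκ1 : (0 : ℝ) < κ + 1 := by linarith
  set H : ℤ → ℝ := fun k => (1 + |(k : ℝ)|) ^ d *
      min ((2 : ℝ) ^ (κ * (k : ℝ) / (κ + 1))) ((2 : ℝ) ^ ((κ - a) * (k : ℝ) / (κ + 1))) with hH
  have hHsum : Summable H := H_summable κ a d hκ ha
  have hH0 : ∀ k, 0 ≤ H k := by
    intro k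
    have h1 : (0 : ℝ) < min ((2 : ℝ) ^ (κ * (k : ℝ) / (κ + 1)))
        ((2 : ℝ) ^ ((κ - a) * (k : ℝ) / (κ + 1))) :=
      lt_min (Real.rpow_pos_of_pos two_pos _) (Real.rpow_pos_of_pos two_pos _)
    have h2 : (0 : ℝ) ≤ (1 + |(k : ℝ)|) ^ d := by positivity
    exact mul_nonneg h2 h1.le
  have hT : 0 ≤ ∑' k, H k := tsum_nonneg hH0
  refine ⟨(2 : ℝ) ^ d * ((∑' k, H k) + 1), by positivity, ?_⟩
  intro s hs p q hpq
  have hinj : Function.Injective (fun m : ℕ => (m : ℤ) - s) := by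
    intro a b h
    simp only [sub_left_inj, Nat.cast_inj] at h
    exact h
  have hkey : ∀ m : ℕ,
      (2 : ℝ) ^ (κ * m / (κ + 1)) * (m + 1 : ℝ) ^ p * ((s : ℝ) + m) ^ q * (s : ℝ) /
        (1 + (2 : ℝ) ^ (((m : ℝ) - s) / (κ + 1))) ^ a
      ≤ (2 : ℝ) ^ d * (s : ℝ) ^ (d - 1) * (2 : ℝ) ^ (κ * s / (κ + 1)) * H ((m : ℤ) - s) := by
    intro m
    have h := key_bound κ a d hκ ha hd s hs p q hpq m
    simp only [hH]
    push_cast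
    exact h
  have hf0 : ∀ m : ℕ, 0 ≤
      (2 : ℝ) ^ (κ * m / (κ + 1)) * (m + 1 : ℝ) ^ p * ((s : ℝ) + m) ^ q * (s : ℝ) /
        (1 + (2 : ℝ) ^ (((m : ℝ) - s) / (κ + 1))) ^ a := by
    intro m
    positivity
  have hHs : Summable (fun m : ℕ => H ((m : ℤ) - s)) := hHsum.comp_injective hinj
  have hsf : Summable (fun m : ℕ =>
      (2 : ℝ) ^ (κ * m / (κ + 1)) * (m + 1 : ℝ) ^ p * ((s : ℝ) + m) ^ q * (s : ℝ) /
        (1 + (2 : ℝ) ^ (((m : ℝ) - s) / (κ + 1))) ^ a) :=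
    Summable.of_nonneg_of_le hf0 hkey (hHs.mul_left _)
  refine ⟨hsf, ?_⟩
  have h1 := Summable.tsum_le_tsum hkey hsf (hHs.mul_left _)
  rw [tsum_mul_left] at h1
  have h2 : ∑' m : ℕ, H ((m : ℤ) - s) ≤ ∑' k, H k :=
    Summable.tsum_le_tsum_of_inj _ hinj (fun c _ => hH0 c) (fun m => le_rfl) hHs hHsum
  have hE : (0 : ℝ) < (2 : ℝ) ^ (κ * s / (κ + 1)) := Real.rpow_pos_of_pos two_pos _
  have hsd : (0 : ℝ) ≤ (s : ℝ) ^ (d - 1) := by positivity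
  have h3 : (2 : ℝ) ^ d * (s : ℝ) ^ (d - 1) * (2 : ℝ) ^ (κ * s / (κ + 1)) *
      (∑' m : ℕ, H ((m : ℤ) - s))
      ≤ (2 : ℝ) ^ d * ((∑' k, H k) + 1) * (2 : ℝ) ^ (κ * s / (κ + 1)) * (s : ℝ) ^ (d - 1) := by
    have hTs : 0 ≤ ∑' m : ℕ, H ((m : ℤ) - s) := tsum_nonneg fun m => hH0 _
    nlinarith [mul_nonneg (mul_nonneg (by positivity : (0:ℝ) ≤ (2:ℝ) ^ d) hsd) hE.le,
      mul_le_mul_of_nonneg_left (h2.trans (by linarith : (∑' k, H k) ≤ (∑' k, H k) + 1))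
        (mul_nonneg (mul_nonneg (by positivity : (0:ℝ) ≤ (2:ℝ) ^ d) hsd) hE.le)]
  exact h1.trans h3
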